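/- arXiv:1909.06871 — 5 statements merged into one kernel-verified Lean document; each statement's English description precedes it below -/
import Mathlib

section
/- Let M = (A,B,C,D) be a discrete-time system and let X ∈ ℂ^{n×n} be Hermitian. For every z ∈ ℂ with z ≠ 0 such that zIₙ − A and z⁻¹Iₙ − Aᴴ are invertible, one has Bᴴ(z⁻¹Iₙ − Aᴴ)⁻¹Cᴴ + Dᴴ + C(zIₙ − A)⁻¹B + D = [Bᴴ(z⁻¹Iₙ − Aᴴ)⁻¹ I_m] · W(X,M) · [(zIₙ − A)⁻¹B ; I_m]. In particular, the right-hand side is independent of the choice of the Hermitian matrix X. -/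
open Matrix

/-- The Kalman–Yakubovich–Popov matrix `W(X,M)` of a discrete-time system `M = (A,B,C,D)`. -/
noncomputable def WK {n m : ℕ} (X A : Matrix (Fin n) (Fin n) ℂ)
    (B : Matrix (Fin n) (Fin m) ℂ) (C : Matrix (Fin m) (Fin n) ℂ)
    (D : Matrix (Fin m) (Fin m) ℂ) :
    Matrix (Fin n ⊕ Fin m) (Fin n ⊕ Fin m) ℂ :=
  fromBlocks (X - Aᴴ * X * A) (Cᴴ - Aᴴ * X * B) (C - Bᴴ * X * A) (Dᴴ + D - Bᴴ * X * B)

/-- for any Hermitian `X` and any `z ≠ 0` with `zI − A` and `z⁻¹I − Aᴴ`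
invertible, `Φ(z) = [Bᴴ(z⁻¹I − Aᴴ)⁻¹  I] · W(X,M) · [(zI − A)⁻¹B ; I]`. -/
theorem stmt0 {n m : ℕ} (A : Matrix (Fin n) (Fin n) ℂ) (B : Matrix (Fin n) (Fin m) ℂ)
    (C : Matrix (Fin m) (Fin n) ℂ) (D : Matrix (Fin m) (Fin m) ℂ)
    (X : Matrix (Fin n) (Fin n) ℂ) (hX : X.IsHermitian)
    (z : ℂ) (hz : z ≠ 0)
    (h1 : IsUnit (z • (1 : Matrix (Fin n) (Fin n) ℂ) - A))
    (h2 : IsUnit (z⁻¹ • (1 : Matrix (Fin n) (Fin n) ℂ) - Aᴴ)) :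
    Bᴴ * (z⁻¹ • (1 : Matrix (Fin n) (Fin n) ℂ) - Aᴴ)⁻¹ * Cᴴ + Dᴴ
      + C * (z • (1 : Matrix (Fin n) (Fin n) ℂ) - A)⁻¹ * B + D =
    fromCols (Bᴴ * (z⁻¹ • (1 : Matrix (Fin n) (Fin n) ℂ) - Aᴴ)⁻¹)
        (1 : Matrix (Fin m) (Fin m) ℂ)
      * WK X A B C D
      * fromRows ((z • (1 : Matrix (Fin n) (Fin n) ℂ) - A)⁻¹ * B)
        (1 : Matrix (Fin m) (Fin m) ℂ) := by
  set P : Matrix (Fin n) (Fin n) ℂ := z • (1 : Matrix (Fin n) (Fin n) ℂ) - A with hP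
  set Q : Matrix (Fin n) (Fin n) ℂ := z⁻¹ • (1 : Matrix (Fin n) (Fin n) ℂ) - Aᴴ with hQ
  have hPd : IsUnit P.det := (Matrix.isUnit_iff_isUnit_det P).mp h1
  have hQd : IsUnit Q.det := (Matrix.isUnit_iff_isUnit_det Q).mp h2
  have hPP : P * P⁻¹ = 1 := Matrix.mul_nonsing_inv P hPd
  have hQQ : Q⁻¹ * Q = 1 := Matrix.nonsing_inv_mul Q hQd
  have hzz : z * z⁻¹ = 1 := mul_inv_cancel₀ hz
  have hzz' : z⁻¹ * z = 1 := inv_mul_cancel₀ hz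
  have key : X - Aᴴ * X * A = Q * X * P + Q * (X * A) + Aᴴ * X * P := by
    rw [hP, hQ]
    simp only [Matrix.sub_mul, Matrix.mul_sub, Matrix.smul_mul, Matrix.mul_smul,
      smul_smul, hzz, hzz', Matrix.one_mul, Matrix.mul_one, one_smul, Matrix.mul_assoc]
    match_scalars <;> field_simp <;> ring
  have cP' : P * (P⁻¹ * B) = B := by rw [← Matrix.mul_assoc, hPP, Matrix.one_mul]
  have cQ' : ∀ M : Matrix (Fin n) (Fin m) ℂ, Q⁻¹ * (Q * M) = M := fun M => by
    rw [← Matrix.mul_assoc, hQQ, Matrix.one_mul]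
  rw [WK, fromCols_mul_fromBlocks, fromCols_mul_fromRows, key]
  simp only [Matrix.mul_one, Matrix.mul_add, Matrix.add_mul, Matrix.mul_sub,
    Matrix.sub_mul, Matrix.mul_assoc, Matrix.one_mul, neg_one_smul, cP', cQ']
  abel
end

section
/- Let M = (A,B,C,D) be a discrete-time system and let X ∈ ℂ^{n×n} be Hermitian with Dᴴ + D − BᴴXB invertible. Suppose X solves the discrete-time algebraic Riccati equation X − AᴴXA − (Cᴴ − AᴴXB)(Dᴴ + D − BᴴXB)⁻¹(C − BᴴXA) = 0. Set F := (Dᴴ + D − BᴴXB)⁻¹(C − BᴴXA), A_F := A − BF, and Û := [−X ; Iₙ ; −F] ∈ ℂ^{(2n+m)×n}. Then the extended invariant-subspace relation [[0, A, B],[−Iₙ, 0, Cᴴ],[0, C, Dᴴ + D]] · Û = [[0, Iₙ, 0],[−Aᴴ, 0, 0],[−Bᴴ, 0, 0]] · Û · A_F holds. -/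
open Matrix

/-- if the Hermitian matrix `X` solves the discrete-time algebraic Riccati
equation (with `Dᴴ + D − BᴴXB` invertible), then with `F = (Dᴴ+D−BᴴXB)⁻¹(C−BᴴXA)`,
`A_F = A − BF` and `Û = [−X ; I ; −F]`, the extended invariant-subspace relation
`[[0,A,B],[−I,0,Cᴴ],[0,C,Dᴴ+D]]·Û = [[0,I,0],[−Aᴴ,0,0],[−Bᴴ,0,0]]·Û·A_F` holds. -/
theorem stmt2 {n m : ℕ} (A : Matrix (Fin n) (Fin n) ℂ) (B : Matrix (Fin n) (Fin m) ℂ)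
    (C : Matrix (Fin m) (Fin n) ℂ) (D : Matrix (Fin m) (Fin m) ℂ)
    (X : Matrix (Fin n) (Fin n) ℂ) (hX : X.IsHermitian)
    (hinv : IsUnit (Dᴴ + D - Bᴴ * X * B))
    (hRicc : X - Aᴴ * X * A
        - (Cᴴ - Aᴴ * X * B) * (Dᴴ + D - Bᴴ * X * B)⁻¹ * (C - Bᴴ * X * A) = 0)
    (F : Matrix (Fin m) (Fin n) ℂ) (hF : F = (Dᴴ + D - Bᴴ * X * B)⁻¹ * (C - Bᴴ * X * A))
    (AF : Matrix (Fin n) (Fin n) ℂ) (hAF : AF = A - B * F)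
    (U : Matrix (Fin n ⊕ (Fin n ⊕ Fin m)) (Fin n) ℂ)
    (hU : U = fromRows (-X) (fromRows (1 : Matrix (Fin n) (Fin n) ℂ) (-F))) :
    fromBlocks (0 : Matrix (Fin n) (Fin n) ℂ) (fromCols A B)
        (fromRows (-(1 : Matrix (Fin n) (Fin n) ℂ)) (0 : Matrix (Fin m) (Fin n) ℂ))
        (fromBlocks (0 : Matrix (Fin n) (Fin n) ℂ) Cᴴ C (Dᴴ + D)) * U
      = fromBlocks (0 : Matrix (Fin n) (Fin n) ℂ)
          (fromCols (1 : Matrix (Fin n) (Fin n) ℂ) (0 : Matrix (Fin n) (Fin m) ℂ))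
          (fromRows (-Aᴴ) (-Bᴴ))
          (0 : Matrix (Fin n ⊕ Fin m) (Fin n ⊕ Fin m) ℂ) * U * AF := by
  have hdet : IsUnit (Dᴴ + D - Bᴴ * X * B).det := (Matrix.isUnit_iff_isUnit_det _).mp hinv
  have hSF : (Dᴴ + D - Bᴴ * X * B) * F = C - Bᴴ * X * A := by
    rw [hF, ← Matrix.mul_assoc, Matrix.mul_nonsing_inv _ hdet, Matrix.one_mul]
  rw [Matrix.sub_mul, Matrix.add_mul] at hSF
  have hX2 : X = Aᴴ * X * A + (Cᴴ - Aᴴ * X * B) * F := by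
    rw [hF, ← Matrix.mul_assoc, ← sub_eq_zero, ← sub_sub]
    exact hRicc
  rw [Matrix.sub_mul] at hX2
  subst hU hAF
  rw [Matrix.fromBlocks_mul_fromRows, Matrix.fromBlocks_mul_fromRows,
    Matrix.fromBlocks_mul_fromRows, Matrix.fromRows_mul, Matrix.fromRows_mul,
    Matrix.fromRows_mul, Matrix.fromCols_mul_fromRows, Matrix.fromCols_mul_fromRows]
  simp only [Matrix.zero_mul, Matrix.mul_zero, zero_add, add_zero, neg_zero,
    Matrix.mul_one, Matrix.one_mul, Matrix.mul_neg, Matrix.neg_mul, neg_neg]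
  have hadd : ∀ (P Q : Matrix (Fin n) (Fin n) ℂ) (R S : Matrix (Fin m) (Fin n) ℂ),
      fromRows P R + fromRows Q S = fromRows (P + Q) (R + S) := by
    intro P Q R S; ext (i | i) j <;> simp
  rw [Matrix.fromRows_mul, hadd, Matrix.fromRows_ext_iff, Matrix.fromRows_ext_iff]
  refine ⟨by noncomm_ring, ?_, ?_⟩
  · rw [Matrix.mul_sub, ← Matrix.mul_assoc (Aᴴ * X) B F]
    linear_combination (norm := abel1) hX2
  · rw [Matrix.mul_sub, ← Matrix.mul_assoc (Bᴴ * X) B F, Matrix.add_mul]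
    linear_combination (norm := abel1) -hSF
end

section
/- Let F₁, F₂ ∈ ℂ^{p×q} be nonzero matrices and define g(γ) := λ_max(γ²·F₁F₁ᴴ + γ⁻²·F₂F₂ᴴ) for γ ∈ (0,∞). Then g is unimodal: there exists γ̲ > 0 such that g is nonincreasing on (0, γ̲], nondecreasing on [γ̲, ∞), and g attains its global minimum over (0,∞) at γ̲. -/
open Matrix

lemma aux_real_smul {m n : ℕ} (t : ℝ) (A : Matrix (Fin m) (Fin n) ℂ) :
    t • A = (t : ℂ) • A := by
  ext i j; simp [Matrix.smul_apply, Complex.real_smul]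

lemma aux_bdd {k : ℕ} (M : Matrix (Fin k) (Fin k) ℂ) :
    BddAbove (Set.range fun x : {x : EuclideanSpace ℂ (Fin k) // ‖x‖ = 1} =>
      (inner ℂ ((x : EuclideanSpace ℂ (Fin k))) (Matrix.toEuclideanLin M x) : ℂ).re) := by
  refine ⟨‖(Matrix.toEuclideanLin M).toContinuousLinearMap‖, ?_⟩
  rintro r ⟨x, rfl⟩
  have h1 : (inner ℂ ((x : EuclideanSpace ℂ (Fin k))) (Matrix.toEuclideanLin M x) : ℂ).re
      ≤ ‖(inner ℂ ((x : EuclideanSpace ℂ (Fin k))) (Matrix.toEuclideanLin M x) : ℂ)‖ :=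
    Complex.re_le_norm _
  refine h1.trans ((norm_inner_le_norm _ _).trans ?_)
  have h2 : ‖Matrix.toEuclideanLin M x‖
      ≤ ‖(Matrix.toEuclideanLin M).toContinuousLinearMap‖ * ‖(x : EuclideanSpace ℂ (Fin k))‖ :=
    (Matrix.toEuclideanLin M).toContinuousLinearMap.le_opNorm _
  calc ‖(x : EuclideanSpace ℂ (Fin k))‖ * ‖Matrix.toEuclideanLin M x‖
      ≤ 1 * (‖(Matrix.toEuclideanLin M).toContinuousLinearMap‖ * 1) := by
        rw [x.2] at h2 ⊢; nlinarith [norm_nonneg (Matrix.toEuclideanLin M x)]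
    _ = _ := by ring

lemma aux_smul {k : ℕ} (s t : ℝ) (A B : Matrix (Fin k) (Fin k) ℂ)
    (x : EuclideanSpace ℂ (Fin k)) :
    (inner ℂ x (Matrix.toEuclideanLin (s • A + t • B) x) : ℂ).re
      = s * (inner ℂ x (Matrix.toEuclideanLin A x) : ℂ).re
        + t * (inner ℂ x (Matrix.toEuclideanLin B x) : ℂ).re := by
  rw [aux_real_smul s A, aux_real_smul t B]
  simp only [map_add, _root_.map_smul, LinearMap.add_apply, LinearMap.smul_apply,
    inner_add_right, inner_smul_right, Complex.add_re, Complex.re_ofReal_mul]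

lemma aux_sq {k q : ℕ} (F : Matrix (Fin k) (Fin q) ℂ) (x : EuclideanSpace ℂ (Fin k)) :
    (inner ℂ x (Matrix.toEuclideanLin (F * Fᴴ) x) : ℂ).re
      = ‖Matrix.toEuclideanLin Fᴴ x‖ ^ 2 := by
  have h1 : Matrix.toEuclideanLin (F * Fᴴ) x
      = Matrix.toEuclideanLin F (Matrix.toEuclideanLin Fᴴ x) := by
    simp [Matrix.toEuclideanLin_apply, Matrix.mulVec_mulVec]
  have h2 : Matrix.toEuclideanLin F = LinearMap.adjoint (Matrix.toEuclideanLin Fᴴ) := by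
    rw [← Matrix.toEuclideanLin_conjTranspose_eq_adjoint, Matrix.conjTranspose_conjTranspose]
  rw [h1, h2, LinearMap.adjoint_inner_right]
  rw [inner_self_eq_norm_sq_to_K]
  norm_cast

lemma aux_exists {k q : ℕ} (F : Matrix (Fin k) (Fin q) ℂ) (hF : F ≠ 0) :
    ∃ x : EuclideanSpace ℂ (Fin k), ‖x‖ = 1 ∧
      0 < (inner ℂ x (Matrix.toEuclideanLin (F * Fᴴ) x) : ℂ).re := by
  have hFH : Fᴴ ≠ 0 := fun h => hF (by simpa using congrArg conjTranspose h)
  obtain ⟨v, hv⟩ : ∃ v, Matrix.toEuclideanLin Fᴴ v ≠ 0 := by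
    by_contra h
    push_neg at h
    apply hFH
    ext i j
    have h0 := h ((WithLp.equiv 2 (Fin k → ℂ)).symm (Pi.single j 1))
    rw [WithLp.equiv_symm_apply, Matrix.toEuclideanLin_apply_piLp_toLp] at h0
    have h1 : (Fᴴ *ᵥ Pi.single j 1) = 0 := by
      have := congrArg (WithLp.equiv 2 (Fin q → ℂ)) h0
      simpa using this
    have h2 := congrFun h1 i
    simpa [Matrix.mulVec_single] using h2
  have hv0 : v ≠ 0 := fun h => hv (by simp [h])
  have hnv : (0:ℝ) < ‖v‖ := norm_pos_iff.mpr hv0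
  refine ⟨((‖v‖⁻¹ : ℝ) : ℂ) • v, ?_, ?_⟩
  · rw [norm_smul]; simp [hnv.ne']
  · rw [aux_sq]
    have : Matrix.toEuclideanLin Fᴴ (((‖v‖⁻¹ : ℝ) : ℂ) • v)
        = ((‖v‖⁻¹ : ℝ) : ℂ) • Matrix.toEuclideanLin Fᴴ v := map_smul _ _ _
    rw [this]
    have hne : ((‖v‖⁻¹ : ℝ) : ℂ) • Matrix.toEuclideanLin Fᴴ v ≠ 0 :=
      smul_ne_zero (by simp [hnv.ne']) hv
    have hpos : 0 < ‖((‖v‖⁻¹ : ℝ) : ℂ) • Matrix.toEuclideanLin Fᴴ v‖ := norm_pos_iff.mpr hne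
    positivity


/-- The largest eigenvalue of a Hermitian matrix, expressed as the supremum of the
Rayleigh quotient over unit vectors. -/
noncomputable def lamMax {k : ℕ} (A : Matrix (Fin k) (Fin k) ℂ) : ℝ :=
  ⨆ x : {x : EuclideanSpace ℂ (Fin k) // ‖x‖ = 1},
    (inner ℂ ((x : EuclideanSpace ℂ (Fin k))) (Matrix.toEuclideanLin A x) : ℂ).re

/-- for nonzero `F₁, F₂`, the function
`g(γ) = λ_max(γ²F₁F₁ᴴ + γ⁻²F₂F₂ᴴ)` is unimodal on `(0,∞)`: there is `γ̲ > 0` such that `g`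
is nonincreasing on `(0, γ̲]`, nondecreasing on `[γ̲, ∞)`, and `g` attains its global
minimum at `γ̲`. -/
theorem stmt4 {p q : ℕ} (F₁ F₂ : Matrix (Fin p) (Fin q) ℂ)
    (hF₁ : F₁ ≠ 0) (hF₂ : F₂ ≠ 0) :
    ∃ γmin : ℝ, 0 < γmin ∧
      (∀ γ₁ γ₂ : ℝ, 0 < γ₁ → γ₁ ≤ γ₂ → γ₂ ≤ γmin →
        lamMax ((γ₂ ^ 2) • (F₁ * F₁ᴴ) + ((γ₂⁻¹) ^ 2) • (F₂ * F₂ᴴ))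
          ≤ lamMax ((γ₁ ^ 2) • (F₁ * F₁ᴴ) + ((γ₁⁻¹) ^ 2) • (F₂ * F₂ᴴ)))
      ∧ (∀ γ₁ γ₂ : ℝ, γmin ≤ γ₁ → γ₁ ≤ γ₂ →
        lamMax ((γ₁ ^ 2) • (F₁ * F₁ᴴ) + ((γ₁⁻¹) ^ 2) • (F₂ * F₂ᴴ))
          ≤ lamMax ((γ₂ ^ 2) • (F₁ * F₁ᴴ) + ((γ₂⁻¹) ^ 2) • (F₂ * F₂ᴴ)))
      ∧ (∀ γ : ℝ, 0 < γ →
        lamMax ((γmin ^ 2) • (F₁ * F₁ᴴ) + ((γmin⁻¹) ^ 2) • (F₂ * F₂ᴴ))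
          ≤ lamMax ((γ ^ 2) • (F₁ * F₁ᴴ) + ((γ⁻¹) ^ 2) • (F₂ * F₂ᴴ))) := by
  -- p is positive
  rcases Nat.eq_zero_or_pos p with rfl | hp
  · exact absurd (by ext i j; exact i.elim0) hF₁
  haveI hSne : Nonempty {x : EuclideanSpace ℂ (Fin p) // ‖x‖ = 1} :=
    ⟨⟨EuclideanSpace.single ⟨0, hp⟩ (1:ℂ), by simp⟩⟩
  set S := {x : EuclideanSpace ℂ (Fin p) // ‖x‖ = 1}
  set A := F₁ * F₁ᴴ with hA
  set B := F₂ * F₂ᴴ with hB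
  set a : S → ℝ := fun x => (inner ℂ ((x : EuclideanSpace ℂ (Fin p))) (Matrix.toEuclideanLin A x) : ℂ).re with ha
  set b : S → ℝ := fun x => (inner ℂ ((x : EuclideanSpace ℂ (Fin p))) (Matrix.toEuclideanLin B x) : ℂ).re with hb
  set f : S → ℝ → ℝ := fun x t => t * a x + t⁻¹ * b x with hf
  set h : ℝ → ℝ := fun t => ⨆ x : S, f x t with hh
  have ha_nonneg : ∀ x : S, 0 ≤ a x := fun x => by
    rw [ha]; dsimp only; rw [hA, aux_sq]; positivity
  have hb_nonneg : ∀ x : S, 0 ≤ b x := fun x => by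
    rw [hb]; dsimp only; rw [hB, aux_sq]; positivity
  -- f x t = Rayleigh quotient of the combined matrix
  have hfr : ∀ t : ℝ, (fun x : S => f x t)
      = fun x : S => (inner ℂ ((x : EuclideanSpace ℂ (Fin p)))
          (Matrix.toEuclideanLin (t • A + t⁻¹ • B) x) : ℂ).re := by
    intro t
    funext x
    rw [aux_smul]
  have hbddf : ∀ t : ℝ, BddAbove (Set.range fun x : S => f x t) := by
    intro t; rw [hfr t]; exact aux_bdd _
  have hlam : ∀ t : ℝ, lamMax (t • A + t⁻¹ • B) = h t := by
    intro t
    rw [lamMax, hh]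
    exact (iSup_congr fun x => (congrFun (hfr t) x).symm)
  -- convexity of each f x on (0, ∞)
  have hfconv : ∀ x : S, ConvexOn ℝ (Set.Ioi (0:ℝ)) (f x) := by
    intro x
    have h1 : ConvexOn ℝ (Set.Ioi (0:ℝ)) (fun t : ℝ => t * a x) := by
      have := (convexOn_id (convex_Ioi (0:ℝ))).smul (ha_nonneg x)
      simpa [mul_comm, smul_eq_mul] using this
    have h2 : ConvexOn ℝ (Set.Ioi (0:ℝ)) (fun t : ℝ => t⁻¹ * b x) := by
      have := (convexOn_zpow (-1 : ℤ)).smul (hb_nonneg x) (𝕜 := ℝ)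
      simpa [mul_comm, smul_eq_mul, _root_.zpow_neg] using this
    exact h1.add h2
  -- convexity of h on (0, ∞)
  have hconv : ConvexOn ℝ (Set.Ioi (0:ℝ)) h := by
    refine ⟨convex_Ioi 0, ?_⟩
    intro t ht u hu α β hα hβ hαβ
    refine ciSup_le fun x => ?_
    have h1 := (hfconv x).2 ht hu hα hβ hαβ
    refine h1.trans ?_
    have h2 : α • f x t ≤ α • h t :=
      smul_le_smul_of_nonneg_left (le_ciSup (hbddf t) x) hα
    have h3 : β • f x u ≤ β • h u :=
      smul_le_smul_of_nonneg_left (le_ciSup (hbddf u) x) hβ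
    exact add_le_add h2 h3
  -- max-of-endpoints
  have hmax : ∀ s t u : ℝ, 0 < s → s ≤ t → t ≤ u → h t ≤ max (h s) (h u) := by
    intro s t u hs hst htu
    have hsu : s ≤ u := hst.trans htu
    refine hconv.le_on_segment hs (lt_of_lt_of_le hs hsu) ?_
    rw [segment_eq_Icc hsu]
    exact ⟨hst, htu⟩
  -- coercivity witnesses
  obtain ⟨x₁v, hx₁n, hx₁p⟩ := aux_exists F₁ hF₁
  obtain ⟨x₂v, hx₂n, hx₂p⟩ := aux_exists F₂ hF₂
  set x₁ : S := ⟨x₁v, hx₁n⟩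
  set x₂ : S := ⟨x₂v, hx₂n⟩
  have hax₁ : 0 < a x₁ := hx₁p
  have hbx₂ : 0 < b x₂ := hx₂p
  have hlow1 : ∀ t : ℝ, 0 < t → t * a x₁ ≤ h t := by
    intro t ht
    refine le_trans ?_ (le_ciSup (hbddf t) x₁)
    rw [hf]; dsimp only
    have : 0 ≤ t⁻¹ * b x₁ := mul_nonneg (by positivity) (hb_nonneg x₁)
    linarith
  have hlow2 : ∀ t : ℝ, 0 < t → t⁻¹ * b x₂ ≤ h t := by
    intro t ht
    refine le_trans ?_ (le_ciSup (hbddf t) x₂)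
    rw [hf]; dsimp only
    have : 0 ≤ t * a x₂ := mul_nonneg ht.le (ha_nonneg x₂)
    linarith
  set c : ℝ := h 1 with hc
  have hca : a x₁ ≤ c := by have := hlow1 1 one_pos; simpa using this
  have hcb : b x₂ ≤ c := by have := hlow2 1 one_pos; simpa using this
  have hcpos : 0 < c := lt_of_lt_of_le hax₁ hca
  set ε : ℝ := b x₂ / c with hε
  set T : ℝ := c / a x₁ with hT
  have hεpos : 0 < ε := div_pos hbx₂ hcpos
  have hεle : ε ≤ 1 := (div_le_one hcpos).mpr hcb
  have hTge : 1 ≤ T := (one_le_div hax₁).mpr hca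
  have hmemK : (1:ℝ) ∈ Set.Icc ε T := ⟨hεle, hTge⟩
  have hsub : Set.Icc ε T ⊆ Set.Ioi (0:ℝ) := fun t ht => lt_of_lt_of_le hεpos ht.1
  have hcont : ContinuousOn h (Set.Icc ε T) :=
    (hconv.continuousOn isOpen_Ioi).mono hsub
  obtain ⟨tmin, htminK, hminK⟩ :=
    isCompact_Icc.exists_isMinOn ⟨1, hmemK⟩ hcont
  have htminpos : 0 < tmin := hsub htminK
  have hmin1 : h tmin ≤ c := hminK hmemK
  -- global minimality of tmin on (0, ∞)
  have hglob : ∀ t : ℝ, 0 < t → h tmin ≤ h t := by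
    intro t ht
    by_cases h1 : t < ε
    · have hinv : ε⁻¹ ≤ t⁻¹ := inv_anti₀ ht h1.le
      have h2 : ε⁻¹ * b x₂ ≤ t⁻¹ * b x₂ :=
        mul_le_mul_of_nonneg_right hinv (hb_nonneg x₂)
      have h3 : ε⁻¹ * b x₂ = c := by
        rw [hε]; field_simp
      have := hlow2 t ht
      linarith
    · by_cases h2 : T < t
      · have h3 : T * a x₁ ≤ t * a x₁ :=
          mul_le_mul_of_nonneg_right h2.le (ha_nonneg x₁)
        have h4 : T * a x₁ = c := by
          rw [hT]; field_simp
        have := hlow1 t ht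
        linarith
      · exact hminK ⟨not_lt.mp h1, not_lt.mp h2⟩
  -- conclude, with γmin = sqrt tmin
  refine ⟨Real.sqrt tmin, Real.sqrt_pos.mpr htminpos, ?_, ?_, ?_⟩
  · intro γ₁ γ₂ hγ₁ h12 h2m
    have ht₁pos : 0 < γ₁ ^ 2 := by positivity
    have ht12 : γ₁ ^ 2 ≤ γ₂ ^ 2 := by nlinarith
    have ht2m : γ₂ ^ 2 ≤ tmin := by
      have hs : γ₂ ^ 2 ≤ Real.sqrt tmin ^ 2 := by nlinarith
      rwa [Real.sq_sqrt htminpos.le] at hs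
    rw [show ((γ₁⁻¹)^2 : ℝ) = (γ₁^2)⁻¹ from inv_pow γ₁ 2,
      show ((γ₂⁻¹)^2 : ℝ) = (γ₂^2)⁻¹ from inv_pow γ₂ 2, hlam, hlam]
    have := hmax (γ₁^2) (γ₂^2) tmin ht₁pos ht12 ht2m
    exact this.trans (max_le le_rfl (hglob _ ht₁pos))
  · intro γ₁ γ₂ hm1 h12
    have hγ₁pos : 0 < γ₁ := lt_of_lt_of_le (Real.sqrt_pos.mpr htminpos) hm1
    have hγ₂pos : 0 < γ₂ := hγ₁pos.trans_le h12
    have ht₂pos : 0 < γ₂ ^ 2 := by positivity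
    have ht12 : γ₁ ^ 2 ≤ γ₂ ^ 2 := by nlinarith
    have htm1 : tmin ≤ γ₁ ^ 2 := by
      have hs : Real.sqrt tmin ^ 2 ≤ γ₁ ^ 2 := by
        nlinarith [Real.sqrt_pos.mpr htminpos, Real.sqrt_nonneg tmin]
      rwa [Real.sq_sqrt htminpos.le] at hs
    rw [show ((γ₁⁻¹)^2 : ℝ) = (γ₁^2)⁻¹ from inv_pow γ₁ 2,
      show ((γ₂⁻¹)^2 : ℝ) = (γ₂^2)⁻¹ from inv_pow γ₂ 2, hlam, hlam]
    have := hmax tmin (γ₁^2) (γ₂^2) htminpos htm1 ht12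
    exact this.trans (max_le (hglob _ ht₂pos) le_rfl)
  · intro γ hγ
    rw [show ((Real.sqrt tmin)⁻¹^2 : ℝ) = ((Real.sqrt tmin)^2)⁻¹ from inv_pow _ 2,
      show ((γ⁻¹)^2 : ℝ) = (γ^2)⁻¹ from inv_pow γ 2,
      Real.sq_sqrt htminpos.le, hlam, hlam]
    exact hglob _ (by positivity)
end

section
/- Let X ∈ ℂ^{n×n} be Hermitian positive definite and T ∈ ℂ^{n×n} invertible. Then trace(T X⁻¹ Tᴴ) + trace(T⁻ᴴ X T⁻¹) ≥ 2n, with equality if and only if X = TᴴT. Consequently, among all invertible T, the trace of diag(T, T⁻ᴴ, I_m)·(D_s Ŵ(X,M) D_s)·diag(Tᴴ, T⁻¹, I_m), which equals trace(T X⁻¹ Tᴴ) + trace(T⁻ᴴ X T⁻¹) + (1/2)·trace(Dᴴ + D), is minimized exactly by those T with X = TᴴT, while the determinant of this congruence-transformed matrix is independent of T. -/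
open Matrix
open scoped ComplexOrder

/-- `D_s = diag(Iₙ, Iₙ, (1/√2)·I_m)`. -/
noncomputable def Dscale (n m : ℕ) :
    Matrix (Fin n ⊕ (Fin n ⊕ Fin m)) (Fin n ⊕ (Fin n ⊕ Fin m)) ℂ :=
  fromBlocks 1 0 0 (fromBlocks 1 0 0 ((((Real.sqrt 2)⁻¹ : ℝ) : ℂ) • 1))

/-- The matrix `Ŵ(X,M) = [[X⁻¹, A, B],[Aᴴ, X, Cᴴ],[Bᴴ, C, Dᴴ + D]]`. -/
noncomputable def What {n m : ℕ} (X A : Matrix (Fin n) (Fin n) ℂ)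
    (B : Matrix (Fin n) (Fin m) ℂ) (C : Matrix (Fin m) (Fin n) ℂ)
    (D : Matrix (Fin m) (Fin m) ℂ) :
    Matrix (Fin n ⊕ (Fin n ⊕ Fin m)) (Fin n ⊕ (Fin n ⊕ Fin m)) ℂ :=
  fromBlocks X⁻¹ (fromCols A B) (fromRows Aᴴ Bᴴ) (fromBlocks X Cᴴ C (Dᴴ + D))

/-- `diag(T, T⁻ᴴ, I_m)`. -/
noncomputable def Gmat {n : ℕ} (m : ℕ) (T : Matrix (Fin n) (Fin n) ℂ) :
    Matrix (Fin n ⊕ (Fin n ⊕ Fin m)) (Fin n ⊕ (Fin n ⊕ Fin m)) ℂ :=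
  fromBlocks T 0 0 (fromBlocks (T⁻¹)ᴴ 0 0 1)

lemma trace_fromBlocks' {p q : Type*} [Fintype p] [Fintype q]
    (A : Matrix p p ℂ) (B : Matrix p q ℂ) (C : Matrix q p ℂ) (D : Matrix q q ℂ) :
    (fromBlocks A B C D).trace = A.trace + D.trace := by
  simp [Matrix.trace, Fintype.sum_sum_type, Matrix.diag]

lemma trace_ctms_nonneg {p q : Type*} [Fintype p] [Fintype q] (B : Matrix p q ℂ) :
    0 ≤ (Bᴴ * B).trace := by
  rw [Matrix.trace]
  refine Finset.sum_nonneg fun i _ => ?_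
  rw [Matrix.diag_apply, Matrix.mul_apply]
  exact Finset.sum_nonneg fun j _ => by
    simpa [Matrix.conjTranspose_apply] using star_mul_self_nonneg (B j i)

lemma trace_ctms_eq_zero {p q : Type*} [Fintype p] [Fintype q] (B : Matrix p q ℂ)
    (h : (Bᴴ * B).trace = 0) : B = 0 := by
  have : ∀ i ∈ Finset.univ, (0:ℂ) ≤ (Bᴴ * B).diag i := fun i _ => by
    rw [Matrix.diag_apply, Matrix.mul_apply]
    exact Finset.sum_nonneg fun j _ => by
      simpa [Matrix.conjTranspose_apply] using star_mul_self_nonneg (B j i)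
  have hz := (Finset.sum_eq_zero_iff_of_nonneg this).mp h
  ext i j
  have := hz j (Finset.mem_univ j)
  rw [Matrix.diag_apply, Matrix.mul_apply] at this
  have h2 : ∀ k ∈ Finset.univ, (0:ℂ) ≤ (Bᴴ) j k * B k j := fun k _ => by
    simpa [Matrix.conjTranspose_apply] using star_mul_self_nonneg (B k j)
  have := (Finset.sum_eq_zero_iff_of_nonneg h2).mp this i (Finset.mem_univ i)
  rw [Matrix.conjTranspose_apply] at this
  rcases mul_eq_zero.mp this with h | h
  · simpa using congrArg star h
  · simpa using h

lemma core {n : ℕ} (P Pi : Matrix (Fin n) (Fin n) ℂ) (hP : P.IsHermitian)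
    (hPi : Pi.PosSemidef) (h1 : P * Pi = 1) (h2 : Pi * P = 1) :
    ((2 * n : ℂ) ≤ Pi.trace + P.trace) ∧ (Pi.trace + P.trace = (2 * n : ℂ) ↔ P = 1) := by
  set Q : Matrix (Fin n) (Fin n) ℂ := (P - 1)ᴴ * Pi * (P - 1) with hQ
  have hQps : Q.PosSemidef := hPi.conjTranspose_mul_mul_same (P - 1)
  have hsub : (P - 1)ᴴ = P - 1 := by
    rw [conjTranspose_sub, hP.eq, conjTranspose_one]
  have hQeq : Q = P + Pi - (2 : ℂ) • 1 := by
    have hx : (P - 1) * Pi * (P - 1) = (P * Pi) * P - P * Pi - Pi * P + Pi := by noncomm_ring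
    rw [hQ, hsub, hx, h1, h2, one_mul, two_smul]
    abel
  have htrQ : Q.trace = Pi.trace + P.trace - 2 * n := by
    rw [hQeq, trace_sub, trace_add, trace_smul, trace_one]
    simp [Fintype.card_fin, smul_eq_mul]
    ring
  obtain ⟨Bm, hBm⟩ : ∃ Bm : Matrix (Fin n) (Fin n) ℂ, Q = Bmᴴ * Bm := by
    open scoped MatrixOrder in
    obtain ⟨Bm, hBm⟩ := CStarAlgebra.nonneg_iff_eq_star_mul_self.mp hQps.nonneg
    exact ⟨Bm, hBm⟩
  have htrQ0 : 0 ≤ Q.trace := hBm ▸ trace_ctms_nonneg Bm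
  constructor
  · rw [htrQ] at htrQ0
    exact sub_nonneg.mp htrQ0
  constructor
  · intro heq
    have hQ0 : Q = 0 := by
      rw [hBm]
      rw [trace_ctms_eq_zero Bm (by rw [← hBm, htrQ, heq, sub_self])]
      simp
    have hPieq : Pi = (2 : ℂ) • 1 - P := by
      have h := hQeq.symm.trans hQ0
      rw [sub_eq_zero] at h
      exact eq_sub_of_add_eq' h
    have hPieq2 : Pi = 1 + 1 - P := by rw [hPieq, two_smul]
    have hRR : (P - 1) * (P - 1) = 0 := by
      have hx : P * Pi = P + P - P * P := by rw [hPieq2]; noncomm_ring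
      have hPP : P * P = P + P - 1 := by rw [← h1, hx]; abel
      have hy : (P - 1) * (P - 1) = P * P - P - P + 1 := by noncomm_ring
      rw [hy, hPP]; abel
    have : (P - 1)ᴴ * (P - 1) = 0 := by rw [hsub, hRR]
    exact sub_eq_zero.mp (Matrix.conjTranspose_mul_self_eq_zero.mp this)
  · rintro rfl
    rw [one_mul] at h1
    rw [h1, trace_one]
    push_cast [Fintype.card_fin]
    ring

lemma trace_big {n m : ℕ} (A : Matrix (Fin n) (Fin n) ℂ) (B : Matrix (Fin n) (Fin m) ℂ)
    (C : Matrix (Fin m) (Fin n) ℂ) (D : Matrix (Fin m) (Fin m) ℂ)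
    (X : Matrix (Fin n) (Fin n) ℂ) (T : Matrix (Fin n) (Fin n) ℂ) :
    (Gmat m T * (Dscale n m * What X A B C D * Dscale n m) * (Gmat m T)ᴴ).trace
          = (T * X⁻¹ * Tᴴ).trace + ((T⁻¹)ᴴ * X * T⁻¹).trace + (1 / 2 : ℂ) * (Dᴴ + D).trace := by
  simp only [Gmat, Dscale, What, fromBlocks_multiply, fromBlocks_conjTranspose,
    trace_fromBlocks', Matrix.mul_zero, Matrix.zero_mul, Matrix.mul_one, Matrix.one_mul,
    add_zero, zero_add, conjTranspose_zero, conjTranspose_one, conjTranspose_conjTranspose,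
    Matrix.smul_mul, Matrix.mul_smul, conjTranspose_smul, trace_smul, smul_add, smul_smul]
  rw [show ((((Real.sqrt 2)⁻¹ : ℝ) : ℂ) * (((Real.sqrt 2)⁻¹ : ℝ) : ℂ)) = (1/2 : ℂ) by
    push_cast
    rw [← mul_inv, ← Complex.ofReal_mul, Real.mul_self_sqrt (by norm_num : (0:ℝ) ≤ 2)]
    norm_num]
  simp only [smul_zero, add_zero, zero_add, ← smul_add, trace_smul, trace_add, smul_eq_mul]
  ring

/-- for `X ≻ 0` and invertible `T`,
`trace(TX⁻¹Tᴴ) + trace(T⁻ᴴXT⁻¹) ≥ 2n` with equality iff `X = TᴴT`; the trace of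
`diag(T,T⁻ᴴ,I)·(D_sŴ(X,M)D_s)·diag(Tᴴ,T⁻¹,I)` equals
`trace(TX⁻¹Tᴴ) + trace(T⁻ᴴXT⁻¹) + (1/2)trace(Dᴴ+D)`, so it is minimized exactly by those
`T` with `X = TᴴT`, while the determinant of the transformed matrix is independent of `T`. -/
theorem stmt9 {n m : ℕ} (A : Matrix (Fin n) (Fin n) ℂ) (B : Matrix (Fin n) (Fin m) ℂ)
    (C : Matrix (Fin m) (Fin n) ℂ) (D : Matrix (Fin m) (Fin m) ℂ)
    (X : Matrix (Fin n) (Fin n) ℂ) (hX : X.PosDef) :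
    ∀ T : Matrix (Fin n) (Fin n) ℂ, IsUnit T →
      ((2 * n : ℂ) ≤ (T * X⁻¹ * Tᴴ).trace + ((T⁻¹)ᴴ * X * T⁻¹).trace)
      ∧ ((T * X⁻¹ * Tᴴ).trace + ((T⁻¹)ᴴ * X * T⁻¹).trace = (2 * n : ℂ) ↔ X = Tᴴ * T)
      ∧ (Gmat m T * (Dscale n m * What X A B C D * Dscale n m) * (Gmat m T)ᴴ).trace
          = (T * X⁻¹ * Tᴴ).trace + ((T⁻¹)ᴴ * X * T⁻¹).trace + (1 / 2 : ℂ) * (Dᴴ + D).trace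
      ∧ (Gmat m T * (Dscale n m * What X A B C D * Dscale n m) * (Gmat m T)ᴴ).det
          = (Dscale n m * What X A B C D * Dscale n m).det := by
  intro T hT
  have hdT : IsUnit T.det := (Matrix.isUnit_iff_isUnit_det T).mp hT
  have hTT : T * T⁻¹ = 1 := mul_nonsing_inv T hdT
  have hTT' : T⁻¹ * T = 1 := nonsing_inv_mul T hdT
  have hdX : IsUnit X.det := (Matrix.isUnit_iff_isUnit_det X).mp hX.isUnit
  have hXX : X * X⁻¹ = 1 := mul_nonsing_inv X hdX
  set P : Matrix (Fin n) (Fin n) ℂ := (T⁻¹)ᴴ * X * T⁻¹ with hPdef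
  set Pi : Matrix (Fin n) (Fin n) ℂ := T * X⁻¹ * Tᴴ with hPidef
  have hPherm : P.IsHermitian := isHermitian_conjTranspose_mul_mul T⁻¹ hX.isHermitian
  have hPips : Pi.PosSemidef := hX.inv.posSemidef.mul_mul_conjTranspose_same T
  have h1 : P * Pi = 1 := by
    rw [hPdef, hPidef]
    rw [show (T⁻¹)ᴴ * X * T⁻¹ * (T * X⁻¹ * Tᴴ)
        = (T⁻¹)ᴴ * (X * ((T⁻¹ * T) * (X⁻¹ * Tᴴ))) by simp only [Matrix.mul_assoc],
      hTT', Matrix.one_mul, ← Matrix.mul_assoc X, hXX, Matrix.one_mul, ← conjTranspose_mul,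
      hTT, conjTranspose_one]
  have h2 : Pi * P = 1 := by
    rw [hPdef, hPidef]
    rw [show T * X⁻¹ * Tᴴ * ((T⁻¹)ᴴ * X * T⁻¹)
        = T * (X⁻¹ * ((Tᴴ * (T⁻¹)ᴴ) * (X * T⁻¹))) by simp only [Matrix.mul_assoc],
      ← conjTranspose_mul, hTT', conjTranspose_one, Matrix.one_mul,
      ← Matrix.mul_assoc X⁻¹, nonsing_inv_mul X hdX, Matrix.one_mul, hTT]
  have hcore := core P Pi hPherm hPips h1 h2
  have hPiff : P = 1 ↔ X = Tᴴ * T := by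
    constructor
    · intro hP1
      have : Tᴴ * P * T = Tᴴ * T := by rw [hP1, Matrix.mul_one]
      rw [hPdef, show Tᴴ * ((T⁻¹)ᴴ * X * T⁻¹) * T
          = (Tᴴ * (T⁻¹)ᴴ) * (X * (T⁻¹ * T)) by simp only [Matrix.mul_assoc],
        ← conjTranspose_mul, hTT', conjTranspose_one, Matrix.one_mul, Matrix.mul_one] at this
      exact this
    · intro hXeq
      rw [hPdef, hXeq, show (T⁻¹)ᴴ * (Tᴴ * T) * T⁻¹
          = ((T⁻¹)ᴴ * Tᴴ) * (T * T⁻¹) by simp only [Matrix.mul_assoc],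
        ← conjTranspose_mul, hTT, conjTranspose_one, Matrix.one_mul]
  refine ⟨hcore.1, hcore.2.trans hPiff, trace_big A B C D X T, ?_⟩
  rw [det_mul, det_mul]
  have hg : (Gmat m T).det * ((Gmat m T)ᴴ).det = 1 := by
    have hGdet : (Gmat m T).det = T.det * star (T.det)⁻¹ := by
      rw [Gmat, det_fromBlocks_zero₂₁, det_fromBlocks_zero₂₁, det_one, mul_one,
        det_conjTranspose, det_nonsing_inv, Ring.inverse_eq_inv']
    rw [det_conjTranspose, hGdet, star_mul', star_star, star_inv₀]
    have hd0 : T.det ≠ 0 := hdT.ne_zero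
    have hds0 : star T.det ≠ 0 := star_ne_zero.mpr hd0
    field_simp
  calc (Gmat m T).det * (Dscale n m * What X A B C D * Dscale n m).det * ((Gmat m T)ᴴ).det
      = (Dscale n m * What X A B C D * Dscale n m).det
        * ((Gmat m T).det * ((Gmat m T)ᴴ).det) := by ring
    _ = _ := by rw [hg, mul_one]
end

section
/- Let M = (A,B,C,D) be a discrete-time system and let 0 ≤ ξ₋ < ξ₊ < 1. For ξ ∈ {ξ₋, ξ₊} let M_ξ := (A/(1−ξ), B/(1−ξ), C/(1−ξ), (D − ξI_m)/(1−ξ)). Then for every Hermitian Y ∈ ℂ^{n×n} with Y > 0 and W̃(Y, M_{ξ₊}) ≥ 0, one has W̃(Y, M_{ξ₋}) > 0. In particular, the solution set { Y Hermitian : Y > 0, W̃(Y, M_{ξ₊}) ≥ 0 } is contained in the solution set { Y Hermitian : Y > 0, W̃(Y, M_{ξ₋}) > 0 }. -/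
open Matrix
open scoped ComplexOrder

/-- The matrix `W̃(X,M) = [[X, XA, XB],[AᴴX, X, Cᴴ],[BᴴX, C, Dᴴ + D]]`. -/
noncomputable def Wtil {n m : ℕ} (X A : Matrix (Fin n) (Fin n) ℂ)
    (B : Matrix (Fin n) (Fin m) ℂ) (C : Matrix (Fin m) (Fin n) ℂ)
    (D : Matrix (Fin m) (Fin m) ℂ) :
    Matrix (Fin n ⊕ (Fin n ⊕ Fin m)) (Fin n ⊕ (Fin n ⊕ Fin m)) ℂ :=
  fromBlocks X (fromCols (X * A) (X * B)) (fromRows (Aᴴ * X) (Bᴴ * X))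
    (fromBlocks X Cᴴ C (Dᴴ + D))

-- helper: real smul preserves PSD/PD
lemma psd_rsmul {k : Type*} [Fintype k] {M : Matrix k k ℂ} (h : M.PosSemidef)
    {r : ℝ} (hr : 0 ≤ r) : (r • M).PosSemidef := by
  refine posSemidef_iff_dotProduct_mulVec.mpr ⟨?_, fun x => ?_⟩
  · rw [IsHermitian, conjTranspose_smul, star_trivial, h.1.eq]
  · rw [smul_mulVec, dotProduct_smul, Complex.real_smul]
    exact mul_nonneg (by exact_mod_cast hr) ((posSemidef_iff_dotProduct_mulVec.mp h).2 x)

lemma pd_rsmul {k : Type*} [Fintype k] {M : Matrix k k ℂ} (h : M.PosDef)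
    {r : ℝ} (hr : 0 < r) : (r • M).PosDef := by
  refine posDef_iff_dotProduct_mulVec.mpr ⟨?_, fun x hx => ?_⟩
  · rw [IsHermitian, conjTranspose_smul, star_trivial, h.1.eq]
  · rw [smul_mulVec, dotProduct_smul, Complex.real_smul]
    exact mul_pos (by exact_mod_cast hr) ((posDef_iff_dotProduct_mulVec.mp h).2 hx)

lemma pd_blockdiag {p q : Type*} [Fintype p] [Fintype q] [DecidableEq p] [DecidableEq q]
    {A : Matrix p p ℂ} {D : Matrix q q ℂ} (hA : A.PosDef) (hD : D.PosDef) :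
    (fromBlocks A 0 0 D).PosDef := by
  refine posDef_iff_dotProduct_mulVec.mpr ⟨?_, fun x hx => ?_⟩
  · simp [IsHermitian, fromBlocks_conjTranspose, hA.1.eq, hD.1.eq]
  · have hx' : x = Sum.elim (x ∘ Sum.inl) (x ∘ Sum.inr) := (Sum.elim_comp_inl_inr x).symm
    rw [hx', fromBlocks_mulVec, Function.star_sumElim, sumElim_dotProduct_sumElim,
      zero_mulVec, add_zero, zero_mulVec, zero_add]
    rcases (by
      by_contra hc
      push_neg at hc
      apply hx
      funext i; rcases i with i | i
      · exact congrFun hc.1 i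
      · exact congrFun hc.2 i : x ∘ Sum.inl ≠ 0 ∨ x ∘ Sum.inr ≠ 0) with h | h
    · exact add_pos_of_pos_of_nonneg ((posDef_iff_dotProduct_mulVec.mp hA).2 h) ((posSemidef_iff_dotProduct_mulVec.mp hD.posSemidef).2 _)
    · exact add_pos_of_nonneg_of_pos ((posSemidef_iff_dotProduct_mulVec.mp hA.posSemidef).2 _) ((posDef_iff_dotProduct_mulVec.mp hD).2 h)

noncomputable def Ebig {n m : ℕ} (Y : Matrix (Fin n) (Fin n) ℂ) :
    Matrix (Fin n ⊕ (Fin n ⊕ Fin m)) (Fin n ⊕ (Fin n ⊕ Fin m)) ℂ :=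
  fromBlocks Y 0 0 (fromBlocks Y 0 0 ((2:ℝ) • (1 : Matrix (Fin m) (Fin m) ℂ)))

lemma Wtil_shift {n m : ℕ} (Y A : Matrix (Fin n) (Fin n) ℂ)
    (B : Matrix (Fin n) (Fin m) ℂ) (C : Matrix (Fin m) (Fin n) ℂ)
    (D : Matrix (Fin m) (Fin m) ℂ) (ξ : ℝ) (hξ : ξ < 1) :
    Wtil Y ((1 - ξ)⁻¹ • A) ((1 - ξ)⁻¹ • B) ((1 - ξ)⁻¹ • C)
        ((1 - ξ)⁻¹ • (D - ξ • (1 : Matrix (Fin m) (Fin m) ℂ)))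
      = (1 - ξ)⁻¹ • (Wtil Y A B C D - ξ • Ebig Y) := by
  have h1 : (1 : ℝ) - ξ ≠ 0 := by linarith
  have h1c : (1 : ℂ) - (ξ : ℂ) ≠ 0 := by
    intro h; apply h1; exact_mod_cast h
  ext i j
  rcases i with i | i | i <;> rcases j with j | j | j <;>
    simp [Wtil, Ebig, fromBlocks, fromCols, fromRows_apply_inl, fromRows_apply_inr, Matrix.mul_smul, Matrix.smul_apply,
      Matrix.sub_apply, Matrix.add_apply, Matrix.one_apply, conjTranspose_apply,
      Complex.real_smul, mul_comm] <;>
    (try split_ifs) <;> field_simp [h1c] <;> ring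

/-- for `0 ≤ ξ₋ < ξ₊ < 1`, every Hermitian `Y > 0` with
`W̃(Y, M_{ξ₊}) ≥ 0` satisfies `W̃(Y, M_{ξ₋}) > 0`; in particular the corresponding
solution sets are nested. -/
theorem stmt14 {n m : ℕ} (A : Matrix (Fin n) (Fin n) ℂ) (B : Matrix (Fin n) (Fin m) ℂ)
    (C : Matrix (Fin m) (Fin n) ℂ) (D : Matrix (Fin m) (Fin m) ℂ)
    (ξm ξp : ℝ) (h0 : 0 ≤ ξm) (hmp : ξm < ξp) (hp1 : ξp < 1) :
    (∀ Y : Matrix (Fin n) (Fin n) ℂ, Y.PosDef →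
      (Wtil Y ((1 - ξp)⁻¹ • A) ((1 - ξp)⁻¹ • B) ((1 - ξp)⁻¹ • C)
        ((1 - ξp)⁻¹ • (D - ξp • (1 : Matrix (Fin m) (Fin m) ℂ)))).PosSemidef →
      (Wtil Y ((1 - ξm)⁻¹ • A) ((1 - ξm)⁻¹ • B) ((1 - ξm)⁻¹ • C)
        ((1 - ξm)⁻¹ • (D - ξm • (1 : Matrix (Fin m) (Fin m) ℂ)))).PosDef)
    ∧ {Y : Matrix (Fin n) (Fin n) ℂ | Y.PosDef ∧
        (Wtil Y ((1 - ξp)⁻¹ • A) ((1 - ξp)⁻¹ • B) ((1 - ξp)⁻¹ • C)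
          ((1 - ξp)⁻¹ • (D - ξp • (1 : Matrix (Fin m) (Fin m) ℂ)))).PosSemidef}
      ⊆ {Y : Matrix (Fin n) (Fin n) ℂ | Y.PosDef ∧
        (Wtil Y ((1 - ξm)⁻¹ • A) ((1 - ξm)⁻¹ • B) ((1 - ξm)⁻¹ • C)
          ((1 - ξm)⁻¹ • (D - ξm • (1 : Matrix (Fin m) (Fin m) ℂ)))).PosDef} := by

  have h1p : (0:ℝ) < 1 - ξp := by linarith
  have h1m : (0:ℝ) < 1 - ξm := by linarith
  have main : ∀ Y : Matrix (Fin n) (Fin n) ℂ, Y.PosDef →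
      (Wtil Y ((1 - ξp)⁻¹ • A) ((1 - ξp)⁻¹ • B) ((1 - ξp)⁻¹ • C)
        ((1 - ξp)⁻¹ • (D - ξp • (1 : Matrix (Fin m) (Fin m) ℂ)))).PosSemidef →
      (Wtil Y ((1 - ξm)⁻¹ • A) ((1 - ξm)⁻¹ • B) ((1 - ξm)⁻¹ • C)
        ((1 - ξm)⁻¹ • (D - ξm • (1 : Matrix (Fin m) (Fin m) ℂ)))).PosDef := by
    intro Y hY hW
    rw [Wtil_shift Y A B C D ξp hp1] at hW
    rw [Wtil_shift Y A B C D ξm (by linarith)]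
    have hone : (1 : Matrix (Fin m) (Fin m) ℂ).PosDef :=
      Matrix.PosDef.one
    have hE : (Ebig (m := m) Y).PosDef :=
      pd_blockdiag hY (pd_blockdiag hY (pd_rsmul hone two_pos))
    have hW' : (Wtil Y A B C D - ξp • Ebig Y).PosSemidef := by
      have h2 := psd_rsmul hW h1p.le
      rwa [smul_smul, mul_inv_cancel₀ h1p.ne', one_smul] at h2
    have key : Wtil Y A B C D - ξm • Ebig Y
        = (Wtil Y A B C D - ξp • Ebig Y) + (ξp - ξm) • Ebig Y := by
      module
    refine pd_rsmul ?_ (inv_pos.mpr h1m)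
    rw [key]
    exact Matrix.PosDef.posSemidef_add hW' (pd_rsmul hE (by linarith))
  exact ⟨main, fun Y hY => ⟨hY.1, main Y hY.1 hY.2⟩⟩
end
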